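/- Let W be strictly increasing and right-continuous on [0,1] with W(0)=0, and let n ≥ 0 be an integer. Then for all x ∈ [0,1], ∫_{(0,x]} W(ξ⁻)ⁿ dW(ξ) ≤ W(x)^{n+1}/(n+1), where W(ξ⁻) denotes the left limit of W at ξ and dW is the Lebesgue–Stieltjes measure induced by W. -/

import Mathlib

open MeasureTheory Set

/-- For `W` strictly increasing, right-continuous on `[0,1]` with `W 0 = 0`, and `n ≥ 0`,
`∫_{(0,x]} W(ξ⁻)ⁿ dW(ξ) ≤ W(x)^{n+1}/(n+1)` for all `x ∈ [0,1]`. -/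
lemma key_bound (W : StieltjesFunction ℝ) (x t : ℝ) :
    W.measure ({ξ | t ≤ Function.leftLim W ξ} ∩ Set.Ioc 0 x) ≤ ENNReal.ofReal (W x - t) := by
  set G := Function.leftLim W with hG
  have hGmono : Monotone G := W.mono.leftLim
  set A := {ξ | t ≤ G ξ} ∩ Set.Ioc 0 x with hA
  rcases A.eq_empty_or_nonempty with hAe | hAne
  · simp [hAe]
  · have hbdd : BddBelow A := ⟨0, fun a ha => ha.2.1.le⟩
    set s := sInf A with hs
    have ⟨a₀, ha₀⟩ := hAne
    have hsx : s ≤ x := le_trans (csInf_le hbdd ha₀) ha₀.2.2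
    by_cases hcase : t ≤ G s
    · have hsub : A ⊆ Set.Icc s x := fun a ha => ⟨csInf_le hbdd ha, ha.2.2⟩
      calc W.measure A ≤ W.measure (Set.Icc s x) := measure_mono hsub
        _ = ENNReal.ofReal (W x - Function.leftLim W s) := W.measure_Icc s x
        _ ≤ ENNReal.ofReal (W x - t) := by
            apply ENNReal.ofReal_le_ofReal; have : t ≤ Function.leftLim W s := hcase; linarith
    · have hsA : s ∉ A := fun h => hcase h.1
      have hsub : A ⊆ Set.Ioc s x := by
        intro a ha
        exact ⟨lt_of_le_of_ne (csInf_le hbdd ha) (fun h => hsA (h ▸ ha)), ha.2.2⟩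
      have hsltx : s < x := lt_of_lt_of_le (hsub ha₀).1 ha₀.2.2
      have hup : ∀ ξ, s < ξ → ξ ≤ x → t ≤ W ξ := by
        intro ξ h1 h2
        obtain ⟨a, haA, haξ⟩ := exists_lt_of_csInf_lt hAne h1
        have : t ≤ G ξ := le_trans haA.1 (hGmono haξ.le)
        exact le_trans this (W.mono.leftLim_le le_rfl)
      have htWs : t ≤ W s := by
        have hts : Filter.Tendsto W (nhdsWithin s (Set.Ioi s)) (nhds (W s)) :=
          (W.right_continuous s).tendsto.mono_left
            (nhdsWithin_mono s Set.Ioi_subset_Ici_self)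
        refine ge_of_tendsto hts ?_
        filter_upwards [Ioc_mem_nhdsGT_of_mem ⟨le_refl s, hsltx⟩] with ξ hξ
        exact hup ξ hξ.1 hξ.2
      calc W.measure A ≤ W.measure (Set.Ioc s x) := measure_mono hsub
        _ = ENNReal.ofReal (W x - W s) := W.measure_Ioc s x
        _ ≤ ENNReal.ofReal (W x - t) := by apply ENNReal.ofReal_le_ofReal; linarith

theorem stmt1 (W : StieltjesFunction ℝ) (hW : StrictMonoOn W (Set.Icc 0 1))
    (hW0 : W 0 = 0) (n : ℕ) :
    ∀ x ∈ Set.Icc (0:ℝ) 1,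
      ∫ ξ in Set.Ioc (0:ℝ) x, (Function.leftLim W ξ) ^ n ∂W.measure
        ≤ W x ^ (n + 1) / (n + 1 : ℝ) := by
  intro x hx
  have hWx : 0 ≤ W x := by
    have := W.mono hx.1
    linarith [hW0 ▸ this]
  set G := Function.leftLim W with hGdef
  have hGmono : Monotone G := W.mono.leftLim
  have hGmeas : Measurable G := hGmono.measurable
  set μ' := W.measure.restrict (Set.Ioc 0 x) with hμ'
  -- nonnegativity of G on (0, x]
  have hGnn : ∀ ξ ∈ Set.Ioc (0:ℝ) x, 0 ≤ G ξ := by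
    intro ξ hξ
    have := W.mono.le_leftLim hξ.1
    linarith [hW0 ▸ this]
  match n with
  | 0 =>
    simp only [pow_zero, pow_one]
    rw [setIntegral_const, measureReal_def, W.measure_Ioc, smul_eq_mul, mul_one, hW0,
      ENNReal.toReal_ofReal (by linarith)]
    norm_num
  | m + 1 =>
    set n := m + 1 with hn
    have hn0 : (n:ℝ) ≠ 0 := by positivity
    set g : ℝ → ℝ := fun t => (n:ℝ) * t ^ m with hg
    have hgc : Continuous g := by fun_prop
    have f_nn : 0 ≤ᵐ[μ'] G := by
      rw [hμ']
      exact (ae_restrict_iff' measurableSet_Ioc).mpr (Filter.Eventually.of_forall hGnn)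
    have layer := lintegral_comp_eq_lintegral_meas_le_mul μ' f_nn hGmeas.aemeasurable
      (fun t _ => hgc.intervalIntegrable 0 t)
      (by
        refine (ae_restrict_iff' measurableSet_Ioi).mpr (Filter.Eventually.of_forall ?_)
        intro t ht
        have : (0:ℝ) < t := ht
        positivity)
    -- LHS of layer cake equals lintegral of G^n
    have hLHS : ∫⁻ ξ, ENNReal.ofReal (∫ t in (0:ℝ)..G ξ, g t) ∂μ'
        = ∫⁻ ξ, ENNReal.ofReal (G ξ ^ n) ∂μ' := by
      refine lintegral_congr_ae ?_
      filter_upwards [f_nn] with ξ hξ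
      congr 1
      rw [intervalIntegral.integral_const_mul, integral_pow]
      rw [hn]; push_cast; field_simp; simp
    -- bound on the tail-measure integral
    have hbound : ∫⁻ t in Set.Ioi (0:ℝ), μ' {a | t ≤ G a} * ENNReal.ofReal (g t)
        ≤ ∫⁻ t in Set.Ioi (0:ℝ), ENNReal.ofReal (W x - t) * ENNReal.ofReal (g t) := by
      refine lintegral_mono fun t => ?_
      refine mul_le_mul_left ?_ _
      rw [hμ', Measure.restrict_apply (measurableSet_le measurable_const hGmeas)]
      exact key_bound W x t
    -- compute the majorant integral
    have hsplit : ∫⁻ t in Set.Ioi (0:ℝ), ENNReal.ofReal (W x - t) * ENNReal.ofReal (g t)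
        = ENNReal.ofReal (W x ^ (n + 1) / (n + 1 : ℝ)) := by
      rw [← Set.Ioc_union_Ioi_eq_Ioi hWx,
        lintegral_union measurableSet_Ioi (Set.Ioc_disjoint_Ioi le_rfl)]
      have h2 : ∫⁻ t in Set.Ioi (W x), ENNReal.ofReal (W x - t) * ENNReal.ofReal (g t) = 0 := by
        rw [← lintegral_zero (μ := volume.restrict (Set.Ioi (W x)))]
        refine setLIntegral_congr_fun measurableSet_Ioi ?_
        intro t ht
        have : W x - t < 0 := by simp at ht; linarith
        beta_reduce; rw [ENNReal.ofReal_of_nonpos this.le, zero_mul]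
      have h1 : ∫⁻ t in Set.Ioc (0:ℝ) (W x), ENNReal.ofReal (W x - t) * ENNReal.ofReal (g t)
          = ENNReal.ofReal (∫ t in Set.Ioc (0:ℝ) (W x), (W x - t) * g t) := by
        have step : ∫⁻ t in Set.Ioc (0:ℝ) (W x), ENNReal.ofReal (W x - t) * ENNReal.ofReal (g t)
            = ∫⁻ t in Set.Ioc (0:ℝ) (W x), ENNReal.ofReal ((W x - t) * g t) := by
          refine setLIntegral_congr_fun measurableSet_Ioc ?_
          intro t ht
          beta_reduce; rw [ENNReal.ofReal_mul (by linarith [ht.2] : (0:ℝ) ≤ W x - t)]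
        rw [step, ← ofReal_integral_eq_lintegral_ofReal]
        · exact ((continuous_const.sub continuous_id).mul hgc).integrableOn_Ioc
        · refine (ae_restrict_iff' measurableSet_Ioc).mpr (Filter.Eventually.of_forall ?_)
          intro t ht
          have h1 : (0:ℝ) ≤ W x - t := by linarith [ht.2]
          have h2 : (0:ℝ) ≤ t := ht.1.le
          positivity
      rw [h1, h2, add_zero]
      congr 1
      rw [← intervalIntegral.integral_of_le hWx]
      have : ∀ t : ℝ, (W x - t) * g t = (n:ℝ) * W x * t ^ m - (n:ℝ) * t ^ n := by
        intro t; rw [hg]; ring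
      rw [intervalIntegral.integral_congr (fun t _ => this t)]
      rw [intervalIntegral.integral_sub, intervalIntegral.integral_const_mul,
        intervalIntegral.integral_const_mul, integral_pow, integral_pow]
      · rw [hn]; push_cast; field_simp; ring
      · exact (((continuous_const.mul (continuous_pow m))).intervalIntegrable 0 (W x))
      · exact ((continuous_const.mul (continuous_pow n)).intervalIntegrable 0 (W x))
    -- put things together
    rw [integral_eq_lintegral_of_nonneg_ae]
    · refine ENNReal.toReal_le_of_le_ofReal (by positivity) ?_
      calc ∫⁻ ξ, ENNReal.ofReal (G ξ ^ n) ∂μ'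
          = ∫⁻ t in Set.Ioi (0:ℝ), μ' {a | t ≤ G a} * ENNReal.ofReal (g t) := by
            rw [← hLHS, layer]
        _ ≤ _ := hbound
        _ = _ := hsplit
    · filter_upwards [f_nn] with ξ hξ using pow_nonneg (by simpa using hξ) n
    · exact (hGmeas.pow_const n).aestronglyMeasurable
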